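/- Every point of the Cantorval X = { ∑_{n≥1} x_n/4^n : ∀n, x_n ∈ {0,2,3,5} } has at most two digital representations. -/

import Mathlib

noncomputable def centerOfDistances (X : Set ℝ) : Set ℝ :=
  {α | 0 ≤ α ∧ ∀ x ∈ X, ∃ y ∈ X, |x - y| = α}

noncomputable def subsums (a : ℕ → ℝ) : Set ℝ :=
  {x | ∃ A : Set ℕ, x = ∑' n : A, a n}

noncomputable def cantorval : Set ℝ :=
  {x | ∃ d : ℕ → ℝ, (∀ n, d n ∈ ({0, 2, 3, 5} : Set ℝ)) ∧
    x = ∑' n : ℕ, d n / 4 ^ (n + 1)}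

namespace Stmt19Aux

/-- the "state" sequence for a pair of digit sequences -/
noncomputable def RR (a b : ℕ → ℝ) (j : ℕ) : ℝ :=
  ∑' k : ℕ, (b (j + k) - a (j + k)) / 4 ^ (k + 1)

lemma digit_bound {v : ℝ} (h : v ∈ ({0, 2, 3, 5} : Set ℝ)) : 0 ≤ v ∧ v ≤ 5 := by
  simp only [Set.mem_insert_iff, Set.mem_singleton_iff] at h
  rcases h with rfl | rfl | rfl | rfl <;> norm_num

lemma summ (a b : ℕ → ℝ) (ha : ∀ n, a n ∈ ({0, 2, 3, 5} : Set ℝ))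
    (hb : ∀ n, b n ∈ ({0, 2, 3, 5} : Set ℝ)) (j : ℕ) :
    Summable (fun k : ℕ => (b (j + k) - a (j + k)) / 4 ^ (k + 1)) := by
  apply Summable.of_norm
  refine Summable.of_nonneg_of_le (fun k => norm_nonneg _) ?_
    (((summable_geometric_of_lt_one (r := (1/4:ℝ)) (by norm_num) (by norm_num)).mul_left (5:ℝ)))
  · intro k
    have h1 := digit_bound (ha (j + k))
    have h2 := digit_bound (hb (j + k))
    have h4 : (0:ℝ) < 4 ^ (k + 1) := by positivity
    rw [Real.norm_eq_abs, abs_div, abs_of_pos h4]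
    rw [div_le_iff₀ h4]
    have : |b (j + k) - a (j + k)| ≤ 5 := by
      rw [abs_le]; constructor <;> linarith
    have h5 : (1:ℝ) ≤ 4 ^ (k+1) := one_le_pow₀ (by norm_num)
    calc |b (j + k) - a (j + k)| ≤ 5 := this
      _ ≤ 5 * (1/4:ℝ)^k * 4^(k+1) := by
          rw [pow_succ]
          have : (1/4:ℝ)^k * 4^k = 1 := by
            rw [← mul_pow]; norm_num
          nlinarith [this]

lemma RR_bound (a b : ℕ → ℝ) (ha : ∀ n, a n ∈ ({0, 2, 3, 5} : Set ℝ))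
    (hb : ∀ n, b n ∈ ({0, 2, 3, 5} : Set ℝ)) (j : ℕ) : |RR a b j| ≤ 5/3 := by
  have hs := summ a b ha hb j
  have hbd : ∀ k : ℕ, ‖(b (j + k) - a (j + k)) / 4 ^ (k + 1)‖ ≤ (5:ℝ)/4^(k+1) := by
    intro k
    have h1 := digit_bound (ha (j + k))
    have h2 := digit_bound (hb (j + k))
    have h4 : (0:ℝ) < 4 ^ (k + 1) := by positivity
    rw [Real.norm_eq_abs, abs_div, abs_of_pos h4, div_le_div_iff₀ h4 h4]
    have : |b (j + k) - a (j + k)| ≤ 5 := by rw [abs_le]; constructor <;> linarith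
    nlinarith
  have hs5 : Summable (fun k : ℕ => (5:ℝ)/4^(k+1)) := by
    have : ∀ k : ℕ, (5:ℝ)/4^(k+1) = (5/4) * (1/4:ℝ)^k := by
      intro k; rw [pow_succ]; ring_nf; norm_num
    rw [summable_congr this]
    exact (summable_geometric_of_lt_one (by norm_num) (by norm_num)).mul_left _
  calc |RR a b j| ≤ ∑' k : ℕ, ‖(b (j + k) - a (j + k)) / 4 ^ (k + 1)‖ := by
        rw [RR, ← Real.norm_eq_abs]
        exact norm_tsum_le_tsum_norm hs.norm
    _ ≤ ∑' k : ℕ, (5:ℝ)/4^(k+1) := Summable.tsum_le_tsum hbd hs.norm hs5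
    _ = 5/3 := by
        have : ∀ k:ℕ, (5:ℝ)/4^(k+1) = (5/4) * (1/4:ℝ)^k := by
          intro k; rw [pow_succ]; ring_nf; norm_num
        rw [tsum_congr this, tsum_mul_left,
          tsum_geometric_of_lt_one (by norm_num) (by norm_num)]
        norm_num

lemma RR_zero (a b : ℕ → ℝ) (ha : ∀ n, a n ∈ ({0, 2, 3, 5} : Set ℝ))
    (hb : ∀ n, b n ∈ ({0, 2, 3, 5} : Set ℝ))
    (hab : ∑' n : ℕ, a n / 4 ^ (n + 1) = ∑' n : ℕ, b n / 4 ^ (n + 1)) :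
    RR a b 0 = 0 := by
  have hsa : Summable (fun n : ℕ => a n / 4 ^ (n + 1)) := by
    have := summ (fun _ => 0) a (fun _ => by norm_num [Set.mem_insert_iff]) ha 0
    simpa using this
  have hsb : Summable (fun n : ℕ => b n / 4 ^ (n + 1)) := by
    have := summ (fun _ => 0) b (fun _ => by norm_num [Set.mem_insert_iff]) hb 0
    simpa using this
  have : RR a b 0 = (∑' n : ℕ, b n / 4 ^ (n + 1)) - ∑' n : ℕ, a n / 4 ^ (n + 1) := by
    rw [RR, ← Summable.tsum_sub hsb hsa]
    apply tsum_congr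
    intro k
    simp [sub_div]
  rw [this, hab, sub_self]

lemma RR_rec (a b : ℕ → ℝ) (ha : ∀ n, a n ∈ ({0, 2, 3, 5} : Set ℝ))
    (hb : ∀ n, b n ∈ ({0, 2, 3, 5} : Set ℝ)) (j : ℕ) :
    4 * RR a b j = (b j - a j) + RR a b (j + 1) := by
  have hs := summ a b ha hb j
  have h0 : RR a b j = (b j - a j) / 4 + ∑' k : ℕ, (b (j + (k+1)) - a (j + (k+1))) / 4 ^ (k + 2) := by
    rw [RR, Summable.tsum_eq_zero_add hs]
    norm_num
  have h1 : ∑' k : ℕ, (b (j + (k+1)) - a (j + (k+1))) / 4 ^ (k + 2)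
      = (1/4) * RR a b (j+1) := by
    rw [RR, ← tsum_mul_left]
    apply tsum_congr
    intro k
    rw [show j + (k+1) = j + 1 + k by omega]
    rw [pow_succ]
    ring
  rw [h0, h1]; ring

lemma RR_mem (a b : ℕ → ℝ) (ha : ∀ n, a n ∈ ({0, 2, 3, 5} : Set ℝ))
    (hb : ∀ n, b n ∈ ({0, 2, 3, 5} : Set ℝ))
    (hab : ∑' n : ℕ, a n / 4 ^ (n + 1) = ∑' n : ℕ, b n / 4 ^ (n + 1)) (j : ℕ) :
    RR a b j = -1 ∨ RR a b j = 0 ∨ RR a b j = 1 := by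
  induction j with
  | zero => right; left; exact RR_zero a b ha hb hab
  | succ n ih =>
    have hrec := RR_rec a b ha hb n
    have hbd := RR_bound a b ha hb (n+1)
    have hval : RR a b (n+1) = 4 * RR a b n - (b n - a n) := by linarith
    have han := ha n
    have hbn := hb n
    simp only [Set.mem_insert_iff, Set.mem_singleton_iff] at han hbn
    rw [hval] at hbd ⊢
    rcases ih with h | h | h <;> rw [h] at hbd ⊢ <;>
      rcases han with h1 | h1 | h1 | h1 <;> rcases hbn with h2 | h2 | h2 | h2 <;>
      rw [h1, h2] at hbd ⊢ <;> revert hbd <;> norm_num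

lemma RR_ne_zero_succ (a b : ℕ → ℝ) (ha : ∀ n, a n ∈ ({0, 2, 3, 5} : Set ℝ))
    (hb : ∀ n, b n ∈ ({0, 2, 3, 5} : Set ℝ))
    (hab : ∑' n : ℕ, a n / 4 ^ (n + 1) = ∑' n : ℕ, b n / 4 ^ (n + 1))
    (j : ℕ) (h : RR a b j ≠ 0) : RR a b (j+1) ≠ 0 := by
  intro h0
  have hrec := RR_rec a b ha hb j
  rw [h0, add_zero] at hrec
  have hj := RR_mem a b ha hb hab j
  have han := ha j
  have hbn := hb j
  simp only [Set.mem_insert_iff, Set.mem_singleton_iff] at han hbn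
  rcases hj with hh | hh | hh <;> rw [hh] at hrec <;> [skip; exact h hh; skip] <;>
    rcases han with h1 | h1 | h1 | h1 <;> rcases hbn with h2 | h2 | h2 | h2 <;>
    rw [h1, h2] at hrec <;> norm_num at hrec

lemma RR_ne_zero_persist (a b : ℕ → ℝ) (ha : ∀ n, a n ∈ ({0, 2, 3, 5} : Set ℝ))
    (hb : ∀ n, b n ∈ ({0, 2, 3, 5} : Set ℝ))
    (hab : ∑' n : ℕ, a n / 4 ^ (n + 1) = ∑' n : ℕ, b n / 4 ^ (n + 1))
    (j : ℕ) (h : RR a b j ≠ 0) : ∀ k, j ≤ k → RR a b k ≠ 0 := by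
  intro k hk
  induction k with
  | zero => simpa [Nat.le_zero.mp hk] using h
  | succ n ih =>
    rcases Nat.lt_or_ge j (n+1) with hlt | hge
    · exact RR_ne_zero_succ a b ha hb hab n (ih (by omega))
    · have : j = n + 1 := by omega
      rw [← this]; exact h

lemma exists_ne_zero (a b : ℕ → ℝ) (ha : ∀ n, a n ∈ ({0, 2, 3, 5} : Set ℝ))
    (hb : ∀ n, b n ∈ ({0, 2, 3, 5} : Set ℝ))
    (hne : a ≠ b) : ∃ j, RR a b j ≠ 0 := by
  by_contra hc
  push_neg at hc
  apply hne
  funext m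
  have hrec := RR_rec a b ha hb m
  rw [hc m, hc (m+1)] at hrec
  linarith

end Stmt19Aux

open Stmt19Aux
theorem stmt19 (x : ℝ) (hx : x ∈ cantorval)
    (d e f : ℕ → ℝ)
    (hd : ∀ n, d n ∈ ({0, 2, 3, 5} : Set ℝ)) (hd' : x = ∑' n : ℕ, d n / 4 ^ (n + 1))
    (he : ∀ n, e n ∈ ({0, 2, 3, 5} : Set ℝ)) (he' : x = ∑' n : ℕ, e n / 4 ^ (n + 1))
    (hf : ∀ n, f n ∈ ({0, 2, 3, 5} : Set ℝ)) (hf' : x = ∑' n : ℕ, f n / 4 ^ (n + 1)) :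
    d = e ∨ d = f ∨ e = f := by
  by_cases hde : d = e
  · exact Or.inl hde
  by_cases hdf : d = f
  · exact Or.inr (Or.inl hdf)
  right; right
  by_contra hef
  have hde' : ∑' n : ℕ, d n / 4 ^ (n + 1) = ∑' n : ℕ, e n / 4 ^ (n + 1) := by
    rw [← hd', ← he']
  have hdf' : ∑' n : ℕ, d n / 4 ^ (n + 1) = ∑' n : ℕ, f n / 4 ^ (n + 1) := by
    rw [← hd', ← hf']
  have hef' : ∑' n : ℕ, e n / 4 ^ (n + 1) = ∑' n : ℕ, f n / 4 ^ (n + 1) := by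
    rw [← he', ← hf']
  -- find indices where each state sequence is nonzero, persistently
  obtain ⟨j1, hj1⟩ := exists_ne_zero d e hd he hde
  obtain ⟨j2, hj2⟩ := exists_ne_zero d f hd hf hdf
  obtain ⟨j3, hj3⟩ := exists_ne_zero e f he hf hef
  set J := max j1 (max j2 j3) with hJ
  have hA : RR d e J ≠ 0 := RR_ne_zero_persist d e hd he hde' j1 hj1 J (le_max_left _ _)
  have hB : RR d f J ≠ 0 := RR_ne_zero_persist d f hd hf hdf' j2 hj2 J
    (le_trans (le_max_left _ _) (le_max_right _ _))
  have hS : RR e f J ≠ 0 := RR_ne_zero_persist e f he hf hef' j3 hj3 J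
    (le_trans (le_max_right _ _) (le_max_right _ _))
  have hSval : RR e f J = RR d f J - RR d e J := by
    rw [RR, RR, RR, ← Summable.tsum_sub (summ d f hd hf J) (summ d e hd he J)]
    apply tsum_congr
    intro k
    ring
  have hAm := RR_mem d e hd he hde' J
  have hBm := RR_mem d f hd hf hdf' J
  have hSb := RR_bound e f he hf J
  rw [hSval] at hS hSb
  have h1 : RR d e J = -1 ∨ RR d e J = 1 := by
    rcases hAm with h | h | h
    exacts [Or.inl h, absurd h hA, Or.inr h]
  have h2 : RR d f J = -1 ∨ RR d f J = 1 := by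
    rcases hBm with h | h | h
    exacts [Or.inl h, absurd h hB, Or.inr h]
  rcases h1 with h1 | h1 <;> rcases h2 with h2 | h2 <;>
    rw [h1, h2] at hS hSb <;> revert hS hSb <;> norm_num
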